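/- arXiv:1509.03092 — 3 statements merged into one kernel-verified Lean document; each statement's English description precedes it below -/
import Mathlib

section
/- Let G be a cubic (3-regular) simple graph of order n with independence number α(G) = 3n/8, and let S ⊆ V(G) be an independent set with |S| = 3n/8 such that no vertex of S is contained in a triangle of G. If u and v are two distinct vertices of G∖S each having degree 2 in G∖S, then the (one-element) neighborhoods of u and v in S are distinct, i.e. N_S(u) ≠ N_S(v). -/
open SimpleGraph

variable {V : Type*}

/-- A (potential) copy of the double-star `S_{1,r-1}` in a graph on vertex set `V`.
`center` is the vertex of degree `r`, `mid` is the vertex of degree 2 (adjacent to `center`),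
`pend` is the pendant neighbour of `mid`, and `leaf i` are the `r - 1` pendant
neighbours of `center`.  For `r = 3` this is the double-star `S_{1,2}`. -/
structure DoubleStarCopy (V : Type*) (r : ℕ) where
  center : V
  mid : V
  pend : V
  leaf : Fin (r - 1) → V

namespace DoubleStarCopy

variable {r : ℕ}

/-- The list of vertices of the copy. -/
def vertList (t : DoubleStarCopy V r) : List V :=
  t.center :: t.mid :: t.pend :: List.ofFn t.leaf

/-- The vertex set of the copy. -/
def verts (t : DoubleStarCopy V r) : Set V := {v | v ∈ t.vertList}

/-- The pendant (degree-one) vertices of the copy. -/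
def pendants (t : DoubleStarCopy V r) : Set V := insert t.pend (Set.range t.leaf)

/-- The edge set of the copy. -/
def edges (t : DoubleStarCopy V r) : Set (Sym2 V) :=
  insert s(t.center, t.mid) (insert s(t.mid, t.pend)
    (Set.range fun i => s(t.center, t.leaf i)))

/-- `t` is a genuine copy of the double-star `S_{1,r-1}` inside `G`:
its vertices are pairwise distinct and all its edges are edges of `G`. -/
def IsCopyIn (G : SimpleGraph V) (t : DoubleStarCopy V r) : Prop :=
  t.vertList.Nodup ∧ t.edges ⊆ G.edgeSet

end DoubleStarCopy

/-- `𝒟` is an `S_{1,r-1}`-decomposition of `G`: every member of `𝒟` is a copy of the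
double-star `S_{1,r-1}` in `G`, and every edge of `G` lies in exactly one member of `𝒟`. -/
def IsDSDecompOf (G : SimpleGraph V) (r : ℕ) (𝒟 : Set (DoubleStarCopy V r)) : Prop :=
  (∀ t ∈ 𝒟, t.IsCopyIn G) ∧ ∀ e ∈ G.edgeSet, ∃! t, t ∈ 𝒟 ∧ e ∈ t.edges

/-- `G` has an `S_{1,r-1}`-decomposition. -/
def HasDSDecomp (G : SimpleGraph V) (r : ℕ) : Prop :=
  ∃ 𝒟 : Set (DoubleStarCopy V r), IsDSDecompOf G r 𝒟

/-- `G` is `(S_{1,r-1}, S)`-decomposable: it has an `S_{1,r-1}`-decomposition in which `S`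
is exactly the set of vertices occurring as the degree-`r` vertex of some copy. -/
def IsDSSDecomposable (G : SimpleGraph V) (r : ℕ) (S : Set V) : Prop :=
  ∃ 𝒟 : Set (DoubleStarCopy V r), IsDSDecompOf G r 𝒟 ∧ S = {v | ∃ t ∈ 𝒟, t.center = v}

/-- `S` is an independent set of `G`. -/
def IsIndepSetIn (G : SimpleGraph V) (S : Set V) : Prop :=
  ∀ ⦃u⦄, u ∈ S → ∀ ⦃v⦄, v ∈ S → ¬ G.Adj u v

/-- The independence number `α(G)`. -/
noncomputable def indepNumber (G : SimpleGraph V) : ℕ :=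
  sSup {k | ∃ S : Set V, IsIndepSetIn G S ∧ S.ncard = k}

/-- `D` is a dominating set of `G`. -/
def IsDomSet (G : SimpleGraph V) (D : Set V) : Prop :=
  ∀ v ∉ D, ∃ d ∈ D, G.Adj v d

/-- The domination number `γ(G)`. -/
noncomputable def domNumber (G : SimpleGraph V) : ℕ :=
  sInf {k | ∃ D : Set V, IsDomSet G D ∧ D.ncard = k}

/-- `N(X)`, the union of the neighbourhoods of the vertices of `X`. -/
def nbhd (G : SimpleGraph V) (X : Set V) : Set V := {v | ∃ x ∈ X, G.Adj x v}

/-- The degree of `v` in the graph `G ∖ S` (for `v ∉ S`). -/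
noncomputable def degIn (G : SimpleGraph V) (S : Set V) (v : V) : ℕ :=
  {w | w ∉ S ∧ G.Adj v w}.ncard

/-- The vertex `v` lies on a cycle of length `k` in `G`. -/
def InCycleOfLength (G : SimpleGraph V) (v : V) (k : ℕ) : Prop :=
  ∃ c : G.Walk v v, c.IsCycle ∧ c.length = k

/-- A graph is a cycle: it has a (genuine, simple) cycle passing through all of
its vertices and using all of its edges. -/
def IsCycleGraph {W : Type*} (H : SimpleGraph W) : Prop :=
  ∃ (v : W) (c : H.Walk v v), c.IsCycle ∧ (∀ x, x ∈ c.support) ∧ ∀ e ∈ H.edgeSet, e ∈ c.edges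

/-- A graph is a path: it has a simple path passing through all of its vertices and
using all of its edges. -/
def IsPathGraph {W : Type*} (H : SimpleGraph W) : Prop :=
  ∃ (u v : W) (p : H.Walk u v), p.IsPath ∧ (∀ x, x ∈ p.support) ∧ ∀ e ∈ H.edgeSet, e ∈ p.edges

/-- `S` is a cycling set of `G`: every connected component of `G ∖ S` is a cycle. -/
def IsCyclingSet (G : SimpleGraph V) (S : Set V) : Prop :=
  ∀ c : (G.induce Sᶜ).ConnectedComponent, IsCycleGraph ((G.induce Sᶜ).induce c.supp)

/-- `(A, B)` is a bipartition of `G`. -/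
def IsBipartitionOf (G : SimpleGraph V) (A B : Set V) : Prop :=
  A ∪ B = Set.univ ∧ Disjoint A B ∧ ∀ ⦃u v⦄, G.Adj u v → (u ∈ A ↔ v ∈ B)

/-- The edge set of the graph `G ∖ S`: edges of `G` avoiding `S`. -/
def removedEdges (G : SimpleGraph V) (S : Set V) : Set (Sym2 V) :=
  {e | e ∈ G.edgeSet ∧ ∀ v ∈ e, v ∉ S}

/-- Adjacency in the auxiliary bipartite graph `H = (S, L)`:
`s ∈ S` is adjacent to the vertex `u_e` corresponding to an edge `e` of `G ∖ S`
iff `G` has an edge with one end `s` whose other end lies on `e`. -/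
def auxAdj (G : SimpleGraph V) (s : V) (e : Sym2 V) : Prop :=
  ∃ w ∈ e, G.Adj s w

/-- The auxiliary bipartite graph `H = (S, L)` has a perfect matching: a bijection
between `S` and the edges of `G ∖ S` matching each `s ∈ S` with an `H`-neighbour. -/
def AuxHasPerfectMatching (G : SimpleGraph V) (S : Set V) : Prop :=
  ∃ m : ↥S ≃ ↥(removedEdges G S), ∀ s : ↥S, auxAdj G (s : V) ((m s : Sym2 V))

/-- Let `G` be a cubic graph of order `n` with `α(G) = 3n/8` and let `S`
be an independent set of size `3n/8` no vertex of which lies in a triangle.  If `u ≠ v`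
both have degree 2 in `G ∖ S`, then `N_S(u) ≠ N_S(v)`. -/
theorem statement15 {V : Type*} [Fintype V] (G : SimpleGraph V) [DecidableRel G.Adj]
    (n : ℕ) (hn : Fintype.card V = n) (hcubic : G.IsRegularOfDegree 3)
    (halpha : 8 * indepNumber G = 3 * n)
    (S : Set V) (hind : IsIndepSetIn G S) (hcard : 8 * S.ncard = 3 * n)
    (htri : ∀ s ∈ S, ¬ InCycleOfLength G s 3)
    (u v : V) (hu : u ∉ S) (hv : v ∉ S) (huv : u ≠ v)
    (hdu : degIn G S u = 2) (hdv : degIn G S v = 2) :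
    G.neighborSet u ∩ S ≠ G.neighborSet v ∩ S := by
  intro heq
  -- each of u, v has exactly one neighbour in S
  have key : ∀ w, w ∉ S → degIn G S w = 2 → (G.neighborSet w ∩ S).ncard = 1 := by
    intro w hw hd
    have hsplit : G.neighborSet w = (G.neighborSet w ∩ S) ∪ {x | x ∉ S ∧ G.Adj w x} := by
      ext x
      simp only [Set.mem_union, Set.mem_inter_iff, SimpleGraph.mem_neighborSet,
        Set.mem_setOf_eq]
      tauto
    have hdisj : Disjoint (G.neighborSet w ∩ S) {x | x ∉ S ∧ G.Adj w x} := by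
      rw [Set.disjoint_left]
      rintro x ⟨_, hx⟩ ⟨hx', _⟩
      exact hx' hx
    have h3 : (G.neighborSet w).ncard = 3 := by
      rw [Set.ncard_eq_toFinset_card']
      have := hcubic w
      rwa [SimpleGraph.degree, SimpleGraph.neighborFinset] at this
    rw [hsplit, Set.ncard_union_eq hdisj (Set.toFinite _) (Set.toFinite _)] at h3
    have : degIn G S w = {x | x ∉ S ∧ G.Adj w x}.ncard := rfl
    omega
  obtain ⟨s, hs⟩ := Set.ncard_eq_one.mp (key u hu hdu)
  have hsS : s ∈ S := (hs ▸ (Set.mem_singleton s) : s ∈ G.neighborSet u ∩ S).2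
  have hus : G.Adj u s := (hs ▸ (Set.mem_singleton s) : s ∈ G.neighborSet u ∩ S).1
  have hvs : G.Adj v s := by
    have : s ∈ G.neighborSet v ∩ S := heq ▸ hs ▸ Set.mem_singleton s
    exact this.1
  have hsv : G.neighborSet v ∩ S = {s} := heq ▸ hs
  -- u and v are not adjacent (else s would lie in a triangle)
  have hnuv : ¬ G.Adj u v := by
    intro hadj
    refine htri s hsS ⟨SimpleGraph.Walk.cons hus.symm
      (SimpleGraph.Walk.cons hadj (SimpleGraph.Walk.cons hvs SimpleGraph.Walk.nil)), ?_, rfl⟩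
    simp [SimpleGraph.Walk.isCycle_def, SimpleGraph.Walk.isTrail_def, Sym2.eq_iff,
      List.nodup_cons]
    have h1 : s ≠ u := fun h => hu (h.symm ▸ hsS)
    have h2 : s ≠ v := fun h => hv (h.symm ▸ hsS)
    tauto
  -- the enlarged independent set
  set S' : Set V := insert u (insert v (S \ {s})) with hS'
  have hind' : IsIndepSetIn G S' := by
    intro a ha b hb hab
    have hmem : ∀ x, G.Adj u x → x ∈ S → x = s := by
      intro x hx hxS
      have : x ∈ G.neighborSet u ∩ S := ⟨hx, hxS⟩
      rw [hs] at this; exact this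
    have hmemv : ∀ x, G.Adj v x → x ∈ S → x = s := by
      intro x hx hxS
      have : x ∈ G.neighborSet v ∩ S := ⟨hx, hxS⟩
      rw [hsv] at this; exact this
    rcases ha with rfl | rfl | ⟨haS, hane⟩
    · rcases hb with rfl | rfl | ⟨hbS, hbne⟩
      · exact G.loopless.irrefl _ hab
      · exact hnuv hab
      · exact hbne (hmem b hab hbS)
    · rcases hb with rfl | rfl | ⟨hbS, hbne⟩
      · exact hnuv hab.symm
      · exact G.loopless.irrefl _ hab
      · exact hbne (hmemv b hab hbS)
    · rcases hb with rfl | rfl | ⟨hbS, hbne⟩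
      · exact hane (hmem a hab.symm haS)
      · exact hane (hmemv a hab.symm haS)
      · exact hind haS hbS hab
  have hcard' : S'.ncard = S.ncard + 1 := by
    have h1 : u ∉ insert v (S \ {s}) := by
      simp only [Set.mem_insert_iff, Set.mem_diff]
      push_neg
      exact ⟨huv, fun h => absurd h hu⟩
    have h2 : v ∉ S \ {s} := fun h => hv h.1
    rw [Set.ncard_insert_of_notMem h1 (Set.toFinite _),
      Set.ncard_insert_of_notMem h2 (Set.toFinite _),
      Set.ncard_diff_singleton_of_mem hsS]
    have : 0 < S.ncard := (Set.ncard_pos (Set.toFinite _)).mpr ⟨s, hsS⟩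
    omega
  have hbdd : BddAbove {k | ∃ T : Set V, IsIndepSetIn G T ∧ T.ncard = k} := by
    refine ⟨Fintype.card V, ?_⟩
    rintro k ⟨T, _, rfl⟩
    calc T.ncard ≤ (Set.univ : Set V).ncard :=
          Set.ncard_le_ncard (Set.subset_univ T) Set.finite_univ
      _ = Fintype.card V := by rw [Set.ncard_univ, Nat.card_eq_fintype_card]
  have hle : S'.ncard ≤ indepNumber G := le_csSup hbdd ⟨S', hind', rfl⟩
  omega
end

section
/- Let G be a cubic (3-regular) simple graph of order n with independence number α(G) = 3n/8, and let S ⊆ V(G) be an independent set with |S| = 3n/8 such that no vertex of S is contained in a cycle of length 3 or 5 in G. Let v be a vertex of G∖S having degree 1 in G∖S, with S-neighborhood N_S(v) = {x, y}. Then it is not the case that both x and y are adjacent (in G) to vertices of degree 2 in G∖S. -/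
open SimpleGraph

variable {V : Type*}

section Aux16


lemma tri_cycle' {G : SimpleGraph V} {a b c : V}
    (hab : G.Adj a b) (hbc : G.Adj b c) (hca : G.Adj c a) (hac : a ≠ c) :
    ∃ w : G.Walk a a, w.IsCycle ∧ w.length = 3 := by
  refine ⟨.cons hab (.cons hbc (.cons hca .nil)), ?_, rfl⟩
  simp [Walk.isCycle_def, Walk.isTrail_def, hab.ne, hbc.ne, hca.ne, hac, Ne.symm hac,
    Sym2.eq_iff]
  aesop

lemma pent_cycle' {G : SimpleGraph V} {a b c d e : V}
    (hab : G.Adj a b) (hbc : G.Adj b c) (hcd : G.Adj c d) (hde : G.Adj d e)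
    (hea : G.Adj e a) (hac : a ≠ c) (had : a ≠ d) (hbd : b ≠ d) (hbe : b ≠ e)
    (hce : c ≠ e) :
    ∃ w : G.Walk a a, w.IsCycle ∧ w.length = 5 := by
  refine ⟨.cons hab (.cons hbc (.cons hcd (.cons hde (.cons hea .nil)))), ?_, rfl⟩
  simp [Walk.isCycle_def, Walk.isTrail_def, hab.ne, hbc.ne, hcd.ne, hde.ne, hea.ne,
    hac, had, hbd, hbe, hce, Ne.symm hac, Ne.symm had, Ne.symm hbd, Ne.symm hbe,
    Ne.symm hce, Sym2.eq_iff]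
  aesop

/-- degIn as defined in the problem file, restated locally for the aux lemma. -/
lemma uniq_S_neighbor [Fintype V] {G : SimpleGraph V} [DecidableRel G.Adj]
    (hcubic : G.IsRegularOfDegree 3) {S : Set V} {w x : V}
    (hw2 : ({u | u ∉ S ∧ G.Adj w u} : Set V).ncard = 2)
    (hxS : x ∈ S) (hxw : G.Adj w x) :
    ∀ s ∈ S, G.Adj w s → s = x := by
  have hN : (G.neighborSet w).ncard = 3 := by
    have : G.neighborSet w = ↑(G.neighborFinset w) := by simp [neighborFinset_def]
    rw [this, Set.ncard_coe_finset, card_neighborFinset_eq_degree, hcubic w]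
  have hsplit := Set.ncard_inter_add_ncard_diff_eq_ncard (G.neighborSet w) S
    (Set.toFinite _)
  have hdiff : (G.neighborSet w \ S) = {u | u ∉ S ∧ G.Adj w u} := by
    ext u; simp [neighborSet, and_comm]
  rw [hN, hdiff, hw2] at hsplit
  have h1 : (G.neighborSet w ∩ S).ncard = 1 := by omega
  obtain ⟨a, ha⟩ := Set.ncard_eq_one.mp h1
  have hx : x ∈ G.neighborSet w ∩ S := ⟨hxw, hxS⟩
  intro s hs hws
  have hsm : s ∈ G.neighborSet w ∩ S := ⟨hws, hs⟩
  rw [ha] at hx hsm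
  simp_all

end Aux16

/-- Let `G` be a cubic graph of order `n` with `α(G) = 3n/8` and let `S`
be an independent set of size `3n/8` no vertex of which lies on a cycle of length 3 or 5.
If `v` has degree 1 in `G ∖ S` and `N_S(v) = {x, y}`, then `x` and `y` are not both
adjacent to vertices of degree 2 in `G ∖ S`. -/
theorem statement16 {V : Type*} [Fintype V] (G : SimpleGraph V) [DecidableRel G.Adj]
    (n : ℕ) (hn : Fintype.card V = n) (hcubic : G.IsRegularOfDegree 3)
    (halpha : 8 * indepNumber G = 3 * n)
    (S : Set V) (hind : IsIndepSetIn G S) (hcard : 8 * S.ncard = 3 * n)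
    (hcycfree : ∀ s ∈ S, ¬ InCycleOfLength G s 3 ∧ ¬ InCycleOfLength G s 5)
    (v : V) (hv : v ∉ S) (hdeg : degIn G S v = 1)
    (x y : V) (hxy : x ≠ y) (hN : G.neighborSet v ∩ S = {x, y}) :
    ¬ ((∃ w ∉ S, degIn G S w = 2 ∧ G.Adj x w) ∧
        (∃ w ∉ S, degIn G S w = 2 ∧ G.Adj y w)) := by
  rintro ⟨⟨w1, hw1S, hw1deg, hxw1⟩, w2, hw2S, hw2deg, hyw2⟩
  have hx' : x ∈ G.neighborSet v ∩ S := by rw [hN]; exact Or.inl rfl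
  have hy' : y ∈ G.neighborSet v ∩ S := by rw [hN]; exact Or.inr rfl
  obtain ⟨hvx, hxS⟩ := hx'
  obtain ⟨hvy, hyS⟩ := hy'
  have uniq1 : ∀ s ∈ S, G.Adj w1 s → s = x :=
    uniq_S_neighbor hcubic hw1deg hxS hxw1.symm
  have uniq2 : ∀ s ∈ S, G.Adj w2 s → s = y :=
    uniq_S_neighbor hcubic hw2deg hyS hyw2.symm
  have hvw1 : v ≠ w1 := by intro h; rw [h, hw1deg] at hdeg; omega
  have hvw2 : v ≠ w2 := by intro h; rw [h, hw2deg] at hdeg; omega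
  have hw1w2 : w1 ≠ w2 := by
    intro h; subst h; exact hxy ((uniq1 y hyS hyw2.symm).symm)
  have hxw2 : x ≠ w2 := fun h => hw2S (h ▸ hxS)
  have hyw1 : y ≠ w1 := fun h => hw1S (h ▸ hyS)
  have hxw1' : x ≠ w1 := fun h => hw1S (h ▸ hxS)
  have hyw2' : y ≠ w2 := fun h => hw2S (h ▸ hyS)
  have hvxne : v ≠ x := fun h => hv (h ▸ hxS)
  have hvyne : v ≠ y := fun h => hv (h ▸ hyS)
  have nvw1 : ¬ G.Adj v w1 := by
    intro h
    exact (hcycfree x hxS).1 (tri_cycle' hvx.symm h hxw1.symm hxw1')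
  have nvw2 : ¬ G.Adj v w2 := by
    intro h
    exact (hcycfree y hyS).1 (tri_cycle' hvy.symm h hyw2.symm hyw2')
  have nw1w2 : ¬ G.Adj w1 w2 := by
    intro h
    exact (hcycfree x hxS).2
      (pent_cycle' hxw1 h hyw2.symm hvy.symm hvx hxw2 hxy hyw1.symm hvw1.symm hvw2.symm)
  have nadj_vS : ∀ s ∈ S, s ≠ x → s ≠ y → ¬ G.Adj v s := by
    intro s hs hsx hsy hadj
    have : s ∈ G.neighborSet v ∩ S := ⟨hadj, hs⟩
    rw [hN] at this
    rcases this with h | h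
    · exact hsx h
    · exact hsy h
  have nadj_w1S : ∀ s ∈ S, s ≠ x → ¬ G.Adj w1 s := fun s hs hsx hadj =>
    hsx (uniq1 s hs hadj)
  have nadj_w2S : ∀ s ∈ S, s ≠ y → ¬ G.Adj w2 s := fun s hs hsy hadj =>
    hsy (uniq2 s hs hadj)
  set S' : Set V := insert v (insert w1 (insert w2 (S \ {x, y}))) with hS'
  have hindep' : IsIndepSetIn G S' := by
    intro u hu u' hu' hadj
    simp only [hS', Set.mem_insert_iff, Set.mem_diff, Set.mem_singleton_iff,
      not_or] at hu hu'
    rcases hu with rfl | rfl | rfl | ⟨huS, hux, huy⟩ <;>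
      rcases hu' with rfl | rfl | rfl | ⟨hu'S, hu'x, hu'y⟩ <;>
    first
      | exact hadj.ne rfl
      | exact nvw1 hadj
      | exact nvw1 hadj.symm
      | exact nvw2 hadj
      | exact nvw2 hadj.symm
      | exact nw1w2 hadj
      | exact nw1w2 hadj.symm
      | exact nadj_vS _ hu'S hu'x hu'y hadj
      | exact nadj_vS _ huS hux huy hadj.symm
      | exact nadj_w1S _ hu'S hu'x hadj
      | exact nadj_w1S _ huS hux hadj.symm
      | exact nadj_w2S _ hu'S hu'y hadj
      | exact nadj_w2S _ huS huy hadj.symm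
      | exact hind huS hu'S hadj
  have hxyS : ({x, y} : Set V) ⊆ S := by
    intro z hz; rcases hz with rfl | hz
    · exact hxS
    · exact Set.mem_singleton_iff.mp hz ▸ hyS
  have h2le : 2 ≤ S.ncard := by
    have := Set.ncard_le_ncard hxyS S.toFinite
    rwa [Set.ncard_pair hxy] at this
  have hdcard : (S \ {x, y}).ncard = S.ncard - 2 := by
    rw [Set.ncard_diff hxyS, Set.ncard_pair hxy]
  have hcount : S'.ncard = S.ncard + 1 := by
    rw [hS', Set.ncard_insert_of_notMem, Set.ncard_insert_of_notMem,
      Set.ncard_insert_of_notMem, hdcard]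
    · omega
    · exact fun h => hw2S h.1
    · rintro (h | h)
      · exact hw1w2 h
      · exact hw1S h.1
    · rintro (h | h | h)
      · exact hvw1 h
      · exact hvw2 h
      · exact hv h.1
  have hbdd : BddAbove {k | ∃ T : Set V, IsIndepSetIn G T ∧ T.ncard = k} := by
    refine ⟨Fintype.card V, ?_⟩
    rintro k ⟨T, _, rfl⟩
    calc T.ncard ≤ (Set.univ : Set V).ncard :=
          Set.ncard_le_ncard (Set.subset_univ T) Set.finite_univ
      _ = Fintype.card V := by rw [Set.ncard_univ, Nat.card_eq_fintype_card]
  have hle : S.ncard + 1 ≤ indepNumber G :=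
    le_csSup hbdd ⟨S', hindep', hcount⟩
  omega
end

section
/- Let G be a cubic (3-regular) bipartite simple graph of order n with bipartition (A, B), and let D be a dominating set of G with |D| = n/4. Then |D ∩ A| = |D ∩ B| = n/8, and no two distinct vertices of D have a common neighbor in V(G)∖D. -/
open SimpleGraph

variable {V : Type*}

/-- Let `G` be a cubic bipartite graph of order `n` with bipartition
`(A, B)` and let `D` be a dominating set with `|D| = n/4`.  Then
`|D ∩ A| = |D ∩ B| = n/8` and no two distinct vertices of `D` have a common neighbour
outside `D`. -/
theorem statement18 {V : Type*} [Fintype V] (G : SimpleGraph V) [DecidableRel G.Adj]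
    (n : ℕ) (hn : Fintype.card V = n) (hcubic : G.IsRegularOfDegree 3)
    (A B : Set V) (hbip : IsBipartitionOf G A B)
    (D : Set V) (hdom : IsDomSet G D) (hcard : 4 * D.ncard = n) :
    8 * (D ∩ A).ncard = n ∧ 8 * (D ∩ B).ncard = n ∧
      ∀ d₁ ∈ D, ∀ d₂ ∈ D, d₁ ≠ d₂ → ¬ ∃ w, w ∉ D ∧ G.Adj d₁ w ∧ G.Adj d₂ w := by
    classical
  obtain ⟨hAB, hdisj, hadjAB⟩ := hbip
  -- choose a dominator for each vertex, the vertex itself if it is in D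
  have hex : ∀ v : V, ∃ d, d ∈ D ∧ (v ∈ D → d = v) ∧ (v = d ∨ G.Adj d v) := by
    intro v
    by_cases hv : v ∈ D
    · exact ⟨v, hv, fun _ => rfl, Or.inl rfl⟩
    · obtain ⟨d, hd, hadj⟩ := hdom v hv
      exact ⟨d, hd, fun h => absurd h hv, Or.inr hadj.symm⟩
  choose f hfD hfid hfadj using hex
  set N : V → Finset V := fun d => insert d (G.neighborFinset d) with hNdef
  have hNcard : ∀ d, (N d).card = 4 := by
    intro d
    rw [hNdef]
    rw [Finset.card_insert_of_notMem (G.notMem_neighborFinset_self d),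
      G.card_neighborFinset_eq_degree, hcubic d]
  have hmemN : ∀ v, v ∈ N (f v) := by
    intro v
    rcases hfadj v with h | h
    · exact Finset.mem_insert.2 (Or.inl h)
    · exact Finset.mem_insert.2 (Or.inr ((G.mem_neighborFinset _ _).2 h))
  set F : V → Finset V := fun d => Finset.univ.filter (fun v => f v = d) with hFdef
  have hsum : (Finset.univ : Finset V).card = ∑ d ∈ D.toFinset, (F d).card :=
    Finset.card_eq_sum_card_fiberwise (fun v _ => Set.mem_toFinset.2 (hfD v))
  have hFsub : ∀ d, F d ⊆ N d := by
    intro d v hv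
    rw [hFdef, Finset.mem_filter] at hv
    exact hv.2 ▸ hmemN v
  have hDcard : D.toFinset.card = D.ncard := (Set.ncard_eq_toFinset_card' D).symm
  have hle : ∀ d ∈ D.toFinset, (F d).card ≤ 4 := fun d _ =>
    (hNcard d) ▸ Finset.card_le_card (hFsub d)
  have hsum4 : ∑ d ∈ D.toFinset, (F d).card = ∑ d ∈ D.toFinset, 4 := by
    rw [← hsum, Finset.sum_const, smul_eq_mul, Finset.card_univ, hn, hDcard]
    omega
  have hFcard : ∀ d ∈ D.toFinset, (F d).card = 4 := fun d hd =>
    (Finset.sum_eq_sum_iff_of_le hle).1 hsum4 d hd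
  have hFN : ∀ d ∈ D, F d = N d := fun d hd =>
    Finset.eq_of_subset_of_card_le (hFsub d)
      (by rw [hFcard d (Set.mem_toFinset.2 hd), hNcard])
  have key : ∀ d ∈ D, ∀ v, v ∈ N d → f v = d := by
    intro d hd v hv
    have hv' : v ∈ F d := (hFN d hd).symm ▸ hv
    exact (Finset.mem_filter.1 hv').2
  -- D is independent
  have hindep : ∀ d₁ ∈ D, ∀ d₂ ∈ D, ¬ G.Adj d₁ d₂ := by
    intro d₁ h₁ d₂ h₂ hadj
    have e1 : f d₂ = d₁ :=
      key d₁ h₁ d₂ (Finset.mem_insert.2 (Or.inr ((G.mem_neighborFinset _ _).2 hadj)))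
    exact G.ne_of_adj hadj (e1.symm.trans (hfid d₂ h₂))
  -- no common neighbours
  have hthird : ∀ d₁ ∈ D, ∀ d₂ ∈ D, d₁ ≠ d₂ →
      ¬ ∃ w, w ∉ D ∧ G.Adj d₁ w ∧ G.Adj d₂ w := by
    rintro d₁ h₁ d₂ h₂ hne ⟨w, -, ha1, ha2⟩
    have e1 : f w = d₁ :=
      key d₁ h₁ w (Finset.mem_insert.2 (Or.inr ((G.mem_neighborFinset _ _).2 ha1)))
    have e2 : f w = d₂ :=
      key d₂ h₂ w (Finset.mem_insert.2 (Or.inr ((G.mem_neighborFinset _ _).2 ha2)))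
    exact hne (e1.symm.trans e2)
  -- main count: |B' \ D| = 3 * |D ∩ A'|
  have main : ∀ (A' B' : Set V),
      (∀ ⦃u v⦄, G.Adj u v → (u ∈ A' ↔ v ∈ B')) →
      (B' \ D).ncard = 3 * (D ∩ A').ncard := by
    intro A' B' hab
    have hmap : ∀ v ∈ (B' \ D).toFinset, f v ∈ (D ∩ A').toFinset := by
      intro v hv
      rw [Set.mem_toFinset] at hv
      obtain ⟨hvB, hvD⟩ := hv
      have hne : v ≠ f v := fun h => hvD (h ▸ hfD v)
      have hadj : G.Adj (f v) v := (hfadj v).resolve_left hne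
      exact Set.mem_toFinset.2 ⟨hfD v, (hab hadj).2 hvB⟩
    have h1 : (B' \ D).toFinset.card =
        ∑ d ∈ (D ∩ A').toFinset, ((B' \ D).toFinset.filter (fun v => f v = d)).card :=
      Finset.card_eq_sum_card_fiberwise hmap
    have h2 : ∀ d ∈ (D ∩ A').toFinset,
        (B' \ D).toFinset.filter (fun v => f v = d) = G.neighborFinset d := by
      intro d hd
      rw [Set.mem_toFinset] at hd
      obtain ⟨hdD, hdA⟩ := hd
      ext w
      simp only [Finset.mem_filter, Set.mem_toFinset, Set.mem_diff, G.mem_neighborFinset]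
      constructor
      · rintro ⟨⟨hwB, hwD⟩, hfw⟩
        have hw : w ∈ N d := hfw ▸ hmemN w
        rcases Finset.mem_insert.1 hw with h | h
        · exact absurd (h ▸ hdD) hwD
        · exact (G.mem_neighborFinset _ _).1 h
      · intro hadj
        have hwD : w ∉ D := fun hw => hindep d hdD w hw hadj
        exact ⟨⟨(hab hadj).1 hdA, hwD⟩,
          key d hdD w (Finset.mem_insert.2 (Or.inr ((G.mem_neighborFinset _ _).2 hadj)))⟩
    rw [Set.ncard_eq_toFinset_card', Set.ncard_eq_toFinset_card', h1]
    rw [Finset.sum_congr rfl (fun d hd => by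
      rw [h2 d hd, G.card_neighborFinset_eq_degree, hcubic d])]
    rw [Finset.sum_const, smul_eq_mul, mul_comm]
  have hadjBA : ∀ ⦃u v⦄, G.Adj u v → (u ∈ B ↔ v ∈ A) := by
    intro u v huv
    exact (hadjAB huv.symm).symm
  have hBD : (B \ D).ncard = 3 * (D ∩ A).ncard := main A B hadjAB
  have hAD : (A \ D).ncard = 3 * (D ∩ B).ncard := main B A hadjBA
  -- |A| = |B| by counting edges
  have hABcard : A.ncard = B.ncard := by
    have count : ∀ (A' : Set V),
        ((Finset.univ : Finset (V × V)).filter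
          (fun p => p.1 ∈ A' ∧ G.Adj p.1 p.2)).card = 3 * A'.ncard := by
      intro A'
      have hmap : ∀ p ∈ (Finset.univ : Finset (V × V)).filter
          (fun p => p.1 ∈ A' ∧ G.Adj p.1 p.2), p.1 ∈ A'.toFinset := by
        intro p hp
        exact Set.mem_toFinset.2 (Finset.mem_filter.1 hp).2.1
      rw [Finset.card_eq_sum_card_fiberwise hmap]
      have h2 : ∀ a ∈ A'.toFinset,
          (((Finset.univ : Finset (V × V)).filter
            (fun p => p.1 ∈ A' ∧ G.Adj p.1 p.2)).filter (fun p => p.1 = a)).card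
          = 3 := by
        intro a ha
        rw [Set.mem_toFinset] at ha
        rw [← hcubic a, ← G.card_neighborFinset_eq_degree]
        refine Finset.card_bij' (fun p _ => p.2) (fun w _ => (a, w)) ?_ ?_ ?_ ?_
        · intro p hp
          simp only [Finset.mem_filter, Finset.mem_univ, true_and] at hp
          rw [G.mem_neighborFinset]
          exact hp.2 ▸ hp.1.2
        · intro w hw
          rw [G.mem_neighborFinset] at hw
          simp [Finset.mem_filter, ha, hw]
        · intro p hp
          simp only [Finset.mem_filter] at hp
          exact Prod.ext hp.2.symm rfl
        · intro w hw
          rfl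
      rw [Finset.sum_congr rfl h2, Finset.sum_const, smul_eq_mul, mul_comm,
        Set.ncard_eq_toFinset_card']
    have swap : ((Finset.univ : Finset (V × V)).filter
          (fun p => p.1 ∈ A ∧ G.Adj p.1 p.2)).card =
        ((Finset.univ : Finset (V × V)).filter
          (fun p => p.1 ∈ B ∧ G.Adj p.1 p.2)).card := by
      refine Finset.card_bij' (fun p _ => p.swap) (fun p _ => p.swap) ?_ ?_ ?_ ?_
      · intro p hp
        simp only [Finset.mem_filter, Finset.mem_univ, true_and, Prod.fst_swap,
          Prod.snd_swap] at hp ⊢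
        exact ⟨(hadjAB hp.2).1 hp.1, hp.2.symm⟩
      · intro p hp
        simp only [Finset.mem_filter, Finset.mem_univ, true_and, Prod.fst_swap,
          Prod.snd_swap] at hp ⊢
        exact ⟨(hadjBA hp.2).1 hp.1, hp.2.symm⟩
      · intro p _; exact Prod.swap_swap p
      · intro p _; exact Prod.swap_swap p
    have := (count A).symm.trans (swap.trans (count B))
    omega
  -- assemble the arithmetic
  have hAsplit : (A ∩ D).ncard + (A \ D).ncard = A.ncard :=
    Set.ncard_inter_add_ncard_diff_eq_ncard A D (Set.toFinite A)
  have hBsplit : (B ∩ D).ncard + (B \ D).ncard = B.ncard :=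
    Set.ncard_inter_add_ncard_diff_eq_ncard B D (Set.toFinite B)
  have hcommA : (A ∩ D).ncard = (D ∩ A).ncard := by rw [Set.inter_comm]
  have hcommB : (B ∩ D).ncard = (D ∩ B).ncard := by rw [Set.inter_comm]
  have huniv : A.ncard + B.ncard = n := by
    rw [← Set.ncard_union_eq hdisj (Set.toFinite A) (Set.toFinite B), hAB,
      Set.ncard_univ, Nat.card_eq_fintype_card, hn]
  refine ⟨by omega, by omega, hthird⟩
end
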